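/- Let n ≥ 3 and let α be a primitive element of 𝔽_{2^n}. If p, q ∈ 𝔽₂[z] are nonzero polynomials of degree < n with p*(α)/p(α) = q*(α)/q(α), where p*(z) = z^{n−1} p(1/z), then p*(z)q(z) = p(z)q*(z) as polynomials, i.e., the rational functions p*/p and q*/q coincide in 𝔽₂(z). -/
import Mathlib


open Polynomial

private lemma reflect_reflect' {R : Type*} [Semiring R] (N : ℕ) (f : R[X]) :
    (f.reflect N).reflect N = f := by
  ext i
  simp [coeff_reflect]

private lemma natDegree_reflect_le' {R : Type*} [Semiring R] {N : ℕ} {f : R[X]}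
    (h : f.natDegree ≤ N) : (f.reflect N).natDegree ≤ N := by
  refine natDegree_le_iff_coeff_eq_zero.mpr fun i hi => ?_
  rw [coeff_reflect, revAt_eq_self_of_lt hi]
  exact coeff_eq_zero_of_natDegree_lt (lt_of_le_of_lt h hi)

private lemma two_pow_add_ne {n i j : ℕ} (hn : 3 ≤ n) (hi : i < n) (hj : j < n) :
    2 ^ i + 2 ^ j ≠ 2 ^ n - 1 := by
  have h8 : (8 : ℕ) ≤ 2 ^ n := by
    calc (8 : ℕ) = 2 ^ 3 := by norm_num
    _ ≤ 2 ^ n := Nat.pow_le_pow_right (by norm_num) hn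
  have h4n : (4 : ℕ) ∣ 2 ^ n := by
    have := pow_dvd_pow 2 (show 2 ≤ n by omega)
    simpa using this
  have key : ∀ k : ℕ, k < n → 2 ^ k = 1 ∨ 2 ^ k = 2 ∨ (4 : ℕ) ∣ 2 ^ k := by
    intro k _
    match k with
    | 0 => left; rfl
    | 1 => right; left; rfl
    | (m+2) =>
      right; right
      have := pow_dvd_pow 2 (show 2 ≤ m + 2 by omega)
      simpa using this
  intro h
  rcases key i hi with hI | hI | hI <;> rcases key j hj with hJ | hJ | hJ <;> omega

private lemma aeval_ne_zero_of_natDegree_lt {n : ℕ} (hn : 3 ≤ n) (F : Type*) [Field F]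
    [Fintype F] [Algebra (ZMod 2) F] (hcard : Fintype.card F = 2 ^ n)
    (α : F) (hα : orderOf α = 2 ^ n - 1)
    {s : Polynomial (ZMod 2)} (hs : s ≠ 0) (hsd : s.natDegree < n) :
    aeval α s ≠ 0 := by
  haveI : Fact (Nat.Prime 2) := ⟨by norm_num⟩
  have h8 : (8 : ℕ) ≤ 2 ^ n := by
    calc (8 : ℕ) = 2 ^ 3 := by norm_num
    _ ≤ 2 ^ n := Nat.pow_le_pow_right (by norm_num) hn
  have hα0 : α ≠ 0 := by
    intro h0
    have h1 : α ^ (2 ^ n - 1) = 1 := by rw [← hα]; exact pow_orderOf_eq_one α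
    rw [h0, zero_pow (by omega : 2 ^ n - 1 ≠ 0)] at h1
    exact zero_ne_one h1
  -- finrank
  have hfin : Module.finrank (ZMod 2) F = n := by
    have hc := Module.card_eq_pow_finrank (K := ZMod 2) (V := F)
    rw [ZMod.card, hcard] at hc
    exact (Nat.pow_right_injective le_rfl hc.symm)
  letI : DecidableEq F := Classical.decEq F
  -- every nonzero element is a zpower of α
  let u : Fˣ := Units.mk0 α hα0
  have hu : orderOf u = 2 ^ n - 1 := by
    rw [← orderOf_units]; simpa [u] using hα
  have htop : Subgroup.zpowers u = ⊤ := by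
    apply Subgroup.eq_top_of_card_eq
    rw [Nat.card_zpowers, hu, Nat.card_eq_fintype_card, Fintype.card_units, hcard]
  have hmem : ∀ x : F, x ≠ 0 → ∃ k : ℤ, α ^ k = x := by
    intro x hx
    have : Units.mk0 x hx ∈ Subgroup.zpowers u := by rw [htop]; trivial
    obtain ⟨k, hk⟩ := Subgroup.mem_zpowers_iff.mp this
    refine ⟨k, ?_⟩
    have := congrArg (Units.val) hk
    simpa [u, Units.val_zpow_eq_zpow_val] using this
  have hadj : IntermediateField.adjoin (ZMod 2) {α} = ⊤ := by
    rw [eq_top_iff]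
    intro x _
    by_cases hx : x = 0
    · rw [hx]; exact zero_mem _
    · obtain ⟨k, rfl⟩ := hmem x hx
      exact zpow_mem (IntermediateField.mem_adjoin_simple_self _ _) k
  have hint : IsIntegral (ZMod 2) α := IsIntegral.of_finite (ZMod 2) α
  have hmin : (minpoly (ZMod 2) α).natDegree = n := by
    have h1 := IntermediateField.adjoin.finrank hint
    rw [hadj, IntermediateField.finrank_top', hfin] at h1
    exact h1.symm
  intro h0
  have hdvd := minpoly.dvd (ZMod 2) α h0
  have hle := Polynomial.natDegree_le_of_dvd hdvd hs
  omega

/-- If `α` is a primitive element of `𝔽_{2^n}` (`n ≥ 3`) and `p, q ∈ 𝔽₂[z]` are nonzero of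
degree `< n` with `p*(α)/p(α) = q*(α)/q(α)` (where `p* = z^(n-1) p(1/z)` is `reflect (n-1) p`),
then `p* q = p q*` as polynomials, i.e. the rational functions `p*/p` and `q*/q` coincide. -/
theorem stmt8 {n : ℕ} (hn : 3 ≤ n) (F : Type*) [Field F] [Fintype F]
    [Algebra (ZMod 2) F] (hcard : Fintype.card F = 2 ^ n)
    (α : F) (hα : orderOf α = 2 ^ n - 1)
    (p q : Polynomial (ZMod 2)) (hp : p ≠ 0) (hq : q ≠ 0)
    (hpd : p.natDegree < n) (hqd : q.natDegree < n)
    (h : aeval α (p.reflect (n - 1)) / aeval α p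
       = aeval α (q.reflect (n - 1)) / aeval α q) :
    p.reflect (n - 1) * q = p * q.reflect (n - 1) := by
  haveI : Fact (Nat.Prime 2) := ⟨by norm_num⟩
  haveI : CharP F 2 := charP_of_injective_algebraMap (algebraMap (ZMod 2) F).injective 2
  haveI : ExpChar F 2 := .prime Nat.prime_two
  letI : DecidableEq F := Classical.decEq F
  have h8 : (8 : ℕ) ≤ 2 ^ n := by
    calc (8 : ℕ) = 2 ^ 3 := by norm_num
    _ ≤ 2 ^ n := Nat.pow_le_pow_right (by norm_num) hn
  set N := n - 1 with hN
  have hpd' : p.natDegree ≤ N := by omega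
  have hqd' : q.natDegree ≤ N := by omega
  set r : Polynomial (ZMod 2) := p.reflect N * q - p * q.reflect N with hr
  rw [← sub_eq_zero]
  show r = 0
  by_contra hr0
  have hα0 : α ≠ 0 := by
    intro h0
    have h1 : α ^ (2 ^ n - 1) = 1 := by rw [← hα]; exact pow_orderOf_eq_one α
    rw [h0, zero_pow (by omega : 2 ^ n - 1 ≠ 0)] at h1
    exact zero_ne_one h1
  have hpα : aeval α p ≠ 0 := aeval_ne_zero_of_natDegree_lt hn F hcard α hα hp hpd
  have hqα : aeval α q ≠ 0 := aeval_ne_zero_of_natDegree_lt hn F hcard α hα hq hqd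
  have hrα : aeval α r = 0 := by
    have hd := (div_eq_div_iff hpα hqα).mp h
    simp only [hr, map_sub, map_mul]
    linear_combination hd
  have hrd : r.natDegree ≤ 2 * N := by
    refine le_trans (natDegree_sub_le _ _) (max_le ?_ ?_)
    · exact le_trans natDegree_mul_le (by
        have := natDegree_reflect_le' hpd'; omega)
    · exact le_trans natDegree_mul_le (by
        have := natDegree_reflect_le' hqd'; omega)
  have hrefl : r.reflect (2 * N) = -r := by
    rw [hr, reflect_sub, two_mul,
      reflect_mul _ _ (natDegree_reflect_le' hpd') hqd',
      reflect_mul _ _ hpd' (natDegree_reflect_le' hqd'),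
      reflect_reflect', reflect_reflect']
    ring
  -- Frobenius
  let φ : F →ₐ[ZMod 2] F :=
    { frobenius F 2 with
      commutes' := fun c => by
        show frobenius F 2 (algebraMap (ZMod 2) F c) = algebraMap (ZMod 2) F c
        rw [frobenius_def, ← map_pow, ZMod.pow_card] }
  have hfrob : ∀ x : F, aeval (x ^ 2) r = (aeval x r) ^ 2 := by
    intro x
    have hx := aeval_algHom_apply φ x r
    simpa [φ, frobenius_def] using hx
  have hpowroot : ∀ i : ℕ, aeval (α ^ 2 ^ i) r = 0 := by
    intro i
    induction i with
    | zero => simpa using hrα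
    | succ i ih =>
      have he : α ^ 2 ^ (i + 1) = (α ^ 2 ^ i) ^ 2 := by
        rw [← pow_mul, pow_succ]
      rw [he, hfrob, ih]
      norm_num
  have hinvroot : ∀ x : F, x ≠ 0 → aeval x r = 0 → aeval x⁻¹ r = 0 := by
    intro x hx h0
    haveI := invertibleOfNonzero hx
    have he := eval₂_reflect_mul_pow (algebraMap (ZMod 2) F) x (2 * N) r hrd
    rw [hrefl] at he
    rw [invOf_eq_inv] at he
    simp only [← aeval_def] at he
    rw [map_neg, h0] at he
    have hx2 : x ^ (2 * N) ≠ 0 := pow_ne_zero _ hx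
    rcases mul_eq_zero.mp he with h' | h'
    · exact neg_eq_zero.mp h'
    · exact absurd h' hx2
  set m := 2 ^ n - 1 with hm
  have hαm : α ^ m = 1 := by rw [← hα]; exact pow_orderOf_eq_one α
  have h2ilt : ∀ i : ℕ, i < n → 2 ^ i < m := by
    intro i hi
    have h1 : 2 ^ i ≤ 2 ^ (n - 1) := Nat.pow_le_pow_right (by norm_num) (by omega)
    have h2 : 2 ^ (n - 1) * 2 = 2 ^ n := by
      rw [← pow_succ]; congr 1; omega
    omega
  have hroot2 : ∀ i : ℕ, i < n → aeval (α ^ (m - 2 ^ i)) r = 0 := by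
    intro i hi
    have h2i : 2 ^ i ≤ m := le_of_lt (h2ilt i hi)
    have heq : α ^ (m - 2 ^ i) = (α ^ 2 ^ i)⁻¹ := by
      have hmul : α ^ (m - 2 ^ i) * α ^ 2 ^ i = 1 := by
        rw [← pow_add, Nat.sub_add_cancel h2i, hαm]
      exact eq_inv_of_mul_eq_one_left hmul
    rw [heq]
    exact hinvroot _ (pow_ne_zero _ hα0) (hpowroot i)
  -- the exponent set
  set E : Finset ℕ := ((Finset.range n).image fun i => 2 ^ i) ∪
      ((Finset.range n).image fun i => m - 2 ^ i) with hE
  have hElt : ∀ e ∈ E, e < m := by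
    intro e he
    rw [hE, Finset.mem_union] at he
    rcases he with he | he <;> rw [Finset.mem_image] at he <;>
      obtain ⟨i, hi, rfl⟩ := he <;> rw [Finset.mem_range] at hi
    · exact h2ilt i hi
    · have := h2ilt i hi
      have : 1 ≤ 2 ^ i := Nat.one_le_two_pow
      omega
  have hEroot : ∀ e ∈ E, aeval (α ^ e) r = 0 := by
    intro e he
    rw [hE, Finset.mem_union] at he
    rcases he with he | he <;> rw [Finset.mem_image] at he <;>
      obtain ⟨i, hi, rfl⟩ := he <;> rw [Finset.mem_range] at hi
    · exact hpowroot i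
    · exact hroot2 i hi
  have hEcard : E.card = 2 * n := by
    have hinj2 : Set.InjOn (fun i => m - 2 ^ i) (Finset.range n : Set ℕ) := by
      intro a ha b hb hab
      simp only [Finset.coe_range, Set.mem_Iio] at ha hb
      have ha' := h2ilt a ha
      have hb' := h2ilt b hb
      have : 2 ^ a = 2 ^ b := by simp only at hab; omega
      exact Nat.pow_right_injective le_rfl this
    have hdisj : Disjoint ((Finset.range n).image fun i => 2 ^ i)
        ((Finset.range n).image fun i => m - 2 ^ i) := by
      rw [Finset.disjoint_left]
      intro x hx1 hx2
      rw [Finset.mem_image] at hx1 hx2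
      obtain ⟨i, hi, rfl⟩ := hx1
      obtain ⟨j, hj, hji⟩ := hx2
      rw [Finset.mem_range] at hi hj
      have hjm := h2ilt j hj
      have h1j : 1 ≤ 2 ^ j := Nat.one_le_two_pow
      have : 2 ^ i + 2 ^ j = 2 ^ n - 1 := by omega
      exact two_pow_add_ne hn hi hj this
    rw [hE, Finset.card_union_of_disjoint hdisj,
      Finset.card_image_of_injective _ (fun a b hab => Nat.pow_right_injective le_rfl hab),
      Finset.card_image_of_injOn hinj2, Finset.card_range]
    omega
  -- map to F
  have hinj : Function.Injective (algebraMap (ZMod 2) F) := (algebraMap (ZMod 2) F).injective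
  have hmap0 : r.map (algebraMap (ZMod 2) F) ≠ 0 :=
    (Polynomial.map_ne_zero_iff hinj).mpr hr0
  have hsub : E.image (α ^ ·) ⊆ (r.map (algebraMap (ZMod 2) F)).roots.toFinset := by
    intro x hx
    rw [Finset.mem_image] at hx
    obtain ⟨e, he, rfl⟩ := hx
    rw [Multiset.mem_toFinset, mem_roots hmap0, IsRoot, eval_map, ← aeval_def]
    exact hEroot e he
  have hcardim : (E.image (α ^ ·)).card = E.card := by
    apply Finset.card_image_of_injOn
    intro a ha b hb hab
    exact pow_injOn_Iio_orderOf (by simp [hα, ← hm]; exact hElt a ha)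
      (by simp [hα, ← hm]; exact hElt b hb) hab
  have hchain : 2 * n ≤ 2 * N := by
    calc 2 * n = (E.image (α ^ ·)).card := by rw [hcardim, hEcard]
    _ ≤ (r.map (algebraMap (ZMod 2) F)).roots.toFinset.card := Finset.card_le_card hsub
    _ ≤ Multiset.card (r.map (algebraMap (ZMod 2) F)).roots := Multiset.toFinset_card_le _
    _ ≤ (r.map (algebraMap (ZMod 2) F)).natDegree := card_roots' _
    _ ≤ r.natDegree := natDegree_map_le
    _ ≤ 2 * N := hrd
  omega
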